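/- Let N ≥ 2, λ0 > 0, λ1 > 0, a0 ≥ 0, a1 ≥ 0, let φ0, φ1 : ℝ → ℝ satisfy Assumption 1 with parameters a0, a1 respectively, let s_i(x) = φ_i(x) − |x| and φ_i^M(x, v) = |x| + s_i′(v)(x − v) + s_i(v) for i = 0, 1, and let y ∈ ℝ^N. Define F(x) = (1/2)‖y − x‖₂² + λ0·Σ_{n=1}^{N} φ0(x_n) + λ1·Σ_{n=1}^{N−1} φ1((Dx)_n) and F^M(x, v) = (1/2)‖y − x‖₂² + λ0·Σ_{n=1}^{N} φ0^M(x_n, v_n) + λ1·Σ_{n=1}^{N−1} φ1^M((Dx)_n, (Dv)_n). Then F^M(x, v) ≥ F(x) for all x, v ∈ ℝ^N, and F^M(v, v) = F(v) for all v ∈ ℝ^N. -/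

import Mathlib

/-- Assumption 1: a sparsity-inducing penalty function `φ` with non-convexity
parameter `a ≥ 0`: `φ` is continuous on `ℝ`, twice continuously differentiable
on `ℝ \ {0}` and symmetric; `φ' > 0` and `φ'' ≤ 0` on `(0, ∞)`; the right
derivative of `φ` at `0` is `1`; and `inf_{x ≠ 0} φ''(x) = φ''(0⁺) = -a`. -/
structure PenaltyAssumption (φ : ℝ → ℝ) (a : ℝ) : Prop where
  continuous : Continuous φ
  symm : ∀ x : ℝ, φ (-x) = φ x
  hasDerivAt : ∀ x : ℝ, x ≠ 0 → HasDerivAt φ (deriv φ x) x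
  hasDerivAt2 : ∀ x : ℝ, x ≠ 0 → HasDerivAt (deriv φ) (deriv (deriv φ) x) x
  continuousOn_deriv2 : ContinuousOn (deriv (deriv φ)) {x : ℝ | x ≠ 0}
  deriv_pos : ∀ x : ℝ, 0 < x → 0 < deriv φ x
  deriv2_nonpos : ∀ x : ℝ, 0 < x → deriv (deriv φ) x ≤ 0
  rightDeriv_zero_eq_one : HasDerivWithinAt φ 1 (Set.Ioi 0) 0
  isGLB_deriv2 : IsGLB (deriv (deriv φ) '' {x : ℝ | x ≠ 0}) (-a)
  tendsto_deriv2 : Filter.Tendsto (deriv (deriv φ)) (nhdsWithin 0 (Set.Ioi 0)) (nhds (-a))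

open Set Filter Topology

/-- Tangent-line inequality for a differentiable function with antitone derivative. -/
private lemma tangent_of_antitone {s g : ℝ → ℝ} (hd : ∀ x, HasDerivAt s (g x) x)
    (hg : Antitone g) (x v : ℝ) : s x ≤ s v + g v * (x - v) := by
  have hc : Continuous s := by
    rw [continuous_iff_continuousAt]; exact fun t => (hd t).continuousAt
  rcases lt_trichotomy x v with h | h | h
  · obtain ⟨c, hmem, hceq⟩ := exists_hasDerivAt_eq_slope s g h hc.continuousOn
      (fun t _ => hd t)
    have hgc : g v ≤ g c := hg hmem.2.le
    have h1 : g c * (v - x) = s v - s x := by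
      rw [hceq]; exact div_mul_cancel₀ _ (sub_ne_zero.mpr h.ne')
    have h2 : g v * (v - x) ≤ g c * (v - x) :=
      mul_le_mul_of_nonneg_right hgc (by linarith)
    have h3 : g v * (x - v) = -(g v * (v - x)) := by ring
    linarith
  · simp [h]
  · obtain ⟨c, hmem, hceq⟩ := exists_hasDerivAt_eq_slope s g h hc.continuousOn
      (fun t _ => hd t)
    have hgc : g c ≤ g v := hg hmem.1.le
    have h1 : g c * (x - v) = s x - s v := by
      rw [hceq]; exact div_mul_cancel₀ _ (sub_ne_zero.mpr h.ne')
    have h2 : g c * (x - v) ≤ g v * (x - v) :=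
      mul_le_mul_of_nonneg_right hgc (by linarith)
    linarith

private lemma penalty_ineq {φ : ℝ → ℝ} {a : ℝ} (hφ : PenaltyAssumption φ a)
    (s : ℝ → ℝ) (hs : s = fun t => φ t - |t|) (x v : ℝ) :
    φ x ≤ |x| + deriv s v * (x - v) + s v := by
  -- oddness of deriv φ away from 0
  have hodd : ∀ t : ℝ, t ≠ 0 → deriv φ (-t) = -deriv φ t := by
    intro t ht
    have h1 : HasDerivAt φ (deriv φ (-t)) (-t) := hφ.hasDerivAt _ (neg_ne_zero.mpr ht)
    have h2 : HasDerivAt (φ ∘ fun u => -u) (deriv φ (-t) * -1) t :=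
      h1.comp t (hasDerivAt_neg t)
    have h3 : HasDerivAt φ (deriv φ (-t) * -1) t := by
      have : (φ ∘ fun u => -u) = φ := funext fun u => hφ.symm u
      rwa [this] at h2
    have h4 := h3.deriv
    linarith [h4]
  -- deriv φ is antitone on (0, ∞)
  have hAnti' : AntitoneOn (deriv φ) (Ioi 0) := by
    apply antitoneOn_of_deriv_nonpos (convex_Ioi 0)
    · exact fun t ht => ((hφ.hasDerivAt2 t (ne_of_gt ht)).continuousAt).continuousWithinAt
    · rw [interior_Ioi]
      exact fun t ht =>
        (hφ.hasDerivAt2 t (ne_of_gt ht)).differentiableAt.differentiableWithinAt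
    · rw [interior_Ioi]
      exact fun t ht => hφ.deriv2_nonpos t ht
  -- deriv φ ≤ 1 on (0, ∞)
  have hA : ∀ t : ℝ, 0 < t → deriv φ t ≤ 1 := by
    intro t ht
    have hslope : Tendsto (slope φ 0) (𝓝[>] 0) (𝓝 1) :=
      (hasDerivWithinAt_iff_tendsto_slope' (by simp : (0:ℝ) ∉ Ioi 0)).mp
        hφ.rightDeriv_zero_eq_one
    have hev : ∀ᶠ h in 𝓝[>] (0:ℝ), deriv φ t ≤ slope φ 0 h := by
      filter_upwards [Ioo_mem_nhdsGT ht] with h hh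
      obtain ⟨c, hcmem, hceq⟩ := exists_hasDerivAt_eq_slope φ (deriv φ) hh.1
        hφ.continuous.continuousOn
        (fun u hu => hφ.hasDerivAt u (ne_of_gt hu.1))
      have : deriv φ t ≤ deriv φ c := hAnti' hcmem.1 (mem_Ioi.mpr ht)
        (le_of_lt (lt_trans hcmem.2 hh.2))
      rw [slope_def_field]
      simpa [hceq] using this
    exact ge_of_tendsto hslope hev
  -- evenness of s
  have hseven : ∀ t : ℝ, s (-t) = s t := by
    intro t; rw [hs]; simp only [abs_neg, hφ.symm]
  -- derivative of s on (0, ∞)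
  have hs_pos : ∀ t : ℝ, 0 < t → HasDerivAt s (deriv φ t - 1) t := by
    intro t ht; rw [hs]
    exact (hφ.hasDerivAt t (ne_of_gt ht)).sub (hasDerivAt_abs_pos ht)
  -- derivative of s on (-∞, 0)
  have hs_neg : ∀ t : ℝ, t < 0 → HasDerivAt s (deriv φ t + 1) t := by
    intro t ht
    have h1 : HasDerivAt s (deriv φ (-t) - 1) (-t) := hs_pos (-t) (by linarith)
    have h2 : HasDerivAt (s ∘ fun u => -u) ((deriv φ (-t) - 1) * -1) t :=
      h1.comp t (hasDerivAt_neg t)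
    have h3 : HasDerivAt s ((deriv φ (-t) - 1) * -1) t := by
      have : (s ∘ fun u => -u) = s := funext fun u => hseven u
      rwa [this] at h2
    have heq : (deriv φ (-t) - 1) * -1 = deriv φ t + 1 := by
      rw [hodd t (ne_of_lt ht)]; ring
    rwa [heq] at h3
  -- derivative of s at 0
  have hs_zero : HasDerivAt s 0 0 := by
    have habs : HasDerivWithinAt (fun u : ℝ => |u|) 1 (Ioi 0) 0 := by
      apply (hasDerivWithinAt_id (0:ℝ) (Ioi 0)).congr
      · exact fun u hu => abs_of_pos hu
      · exact abs_zero
    have hsr : HasDerivWithinAt s 0 (Ioi 0) 0 := by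
      rw [hs]
      have h := hφ.rightDeriv_zero_eq_one.sub habs; rw [sub_self] at h; exact h
    have hsl : HasDerivWithinAt s 0 (Iio 0) 0 := by
      have hneg : HasDerivWithinAt (fun u : ℝ => -u) (-1) (Iio 0) 0 :=
        (hasDerivAt_neg (0:ℝ)).hasDerivWithinAt
      have hmaps : MapsTo (fun u : ℝ => -u) (Iio 0) (Ioi 0) := by
        intro u hu; simpa using hu
      have hcomp := HasDerivWithinAt.comp_of_eq (0:ℝ) hsr hneg hmaps (by norm_num)
      have : (s ∘ fun u : ℝ => -u) = s := funext fun u => hseven u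
      rw [this] at hcomp
      simpa using hcomp
    rw [hasDerivAt_iff_tendsto_slope, ← nhdsLT_sup_nhdsGT, tendsto_sup]
    constructor
    · exact (hasDerivWithinAt_iff_tendsto_slope' (by simp : (0:ℝ) ∉ Iio 0)).mp hsl
    · exact (hasDerivWithinAt_iff_tendsto_slope' (by simp : (0:ℝ) ∉ Ioi 0)).mp hsr
  -- the derivative function g
  set g : ℝ → ℝ := fun t => if 0 < t then deriv φ t - 1 else if t < 0 then deriv φ t + 1 else 0
    with hg
  have hgpos : ∀ t : ℝ, 0 < t → g t = deriv φ t - 1 := by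
    intro t ht; simp only [hg, if_pos ht]
  have hgneg : ∀ t : ℝ, t < 0 → g t = deriv φ t + 1 := by
    intro t ht; simp only [hg, if_neg (not_lt.mpr ht.le), if_pos ht]
  have hgzero : g 0 = 0 := by simp [hg]
  have hd : ∀ t, HasDerivAt s (g t) t := by
    intro t
    rcases lt_trichotomy t 0 with h | h | h
    · rw [hgneg t h]; exact hs_neg t h
    · rw [h, hgzero]; exact hs_zero
    · rw [hgpos t h]; exact hs_pos t h
  -- g is nonpositive on positives, nonnegative on negatives
  have hg_le : ∀ t : ℝ, 0 < t → g t ≤ 0 := by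
    intro t ht; rw [hgpos t ht]; linarith [hA t ht]
  have hg_ge : ∀ t : ℝ, t < 0 → 0 ≤ g t := by
    intro t ht
    rw [hgneg t ht]
    have := hA (-t) (by linarith)
    rw [hodd t (ne_of_lt ht)] at this
    linarith
  -- g is antitone
  have hAnti : Antitone g := by
    intro u w huw
    rcases lt_trichotomy u 0 with hu | hu | hu
    · rcases lt_trichotomy w 0 with hw | hw | hw
      · rw [hgneg u hu, hgneg w hw]
        have h1 : deriv φ (-u) ≤ deriv φ (-w) :=
          hAnti' (mem_Ioi.mpr (by linarith)) (mem_Ioi.mpr (by linarith)) (by linarith)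
        have h2 := hodd u (ne_of_lt hu)
        have h3 := hodd w (ne_of_lt hw)
        linarith
      · rw [hw, hgzero]; exact hg_ge u hu
      · exact le_trans (hg_le w hw) (hg_ge u hu)
    · rcases eq_or_lt_of_le huw with h | hw
      · rw [h]
      · have hw0 : 0 < w := by rwa [hu] at hw
        rw [hu, hgzero]
        exact hg_le w hw0
    · have hw : 0 < w := lt_of_lt_of_le hu huw
      rw [hgpos u hu, hgpos w hw]
      have := hAnti' (mem_Ioi.mpr hu) (mem_Ioi.mpr hw) huw
      linarith
  -- conclude via the tangent line inequality
  have htan := tangent_of_antitone hd hAnti x v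
  have hderiv : deriv s v = g v := (hd v).deriv
  have hsx : s x = φ x - |x| := by rw [hs]
  rw [hderiv]
  linarith

/-- **The majorizer of the CNC fused lasso objective.**  With
`sᵢ(x) = φᵢ(x) − |x|` and `φᵢᴹ(x, v) = |x| + sᵢ′(v)(x − v) + sᵢ(v)`, the
function `Fᴹ(x, v) = ½‖y − x‖₂² + λ0 Σₙ φ0ᴹ(xₙ, vₙ) + λ1 Σₙ φ1ᴹ((Dx)ₙ, (Dv)ₙ)`
satisfies `Fᴹ(x, v) ≥ F(x)` for all `x, v` and `Fᴹ(v, v) = F(v)`, where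
`F(x) = ½‖y − x‖₂² + λ0 Σₙ φ0(xₙ) + λ1 Σₙ φ1((Dx)ₙ)` and
`(Dx)ₙ = x_{n+1} − xₙ` (signal length `N + 1 ≥ 2`). -/
theorem cnc_flsa_majorizer (N : ℕ) (hN : 1 ≤ N)
    (lam0 lam1 a0 a1 : ℝ) (hlam0 : 0 < lam0) (hlam1 : 0 < lam1)
    (ha0 : 0 ≤ a0) (ha1 : 0 ≤ a1)
    (φ0 φ1 : ℝ → ℝ)
    (hφ0 : PenaltyAssumption φ0 a0) (hφ1 : PenaltyAssumption φ1 a1)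
    (y : Fin (N + 1) → ℝ)
    (s0 s1 : ℝ → ℝ) (hs0 : s0 = fun x => φ0 x - |x|)
    (hs1 : s1 = fun x => φ1 x - |x|)
    (φ0M φ1M : ℝ → ℝ → ℝ)
    (hφ0M : φ0M = fun x v => |x| + deriv s0 v * (x - v) + s0 v)
    (hφ1M : φ1M = fun x v => |x| + deriv s1 v * (x - v) + s1 v)
    (F : (Fin (N + 1) → ℝ) → ℝ) (FM : (Fin (N + 1) → ℝ) → (Fin (N + 1) → ℝ) → ℝ)
    (hF : ∀ x, F x = (1 / 2) * ∑ n, (y n - x n) ^ 2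
      + lam0 * ∑ n, φ0 (x n)
      + lam1 * ∑ i : Fin N, φ1 (x i.succ - x i.castSucc))
    (hFM : ∀ x v, FM x v = (1 / 2) * ∑ n, (y n - x n) ^ 2
      + lam0 * ∑ n, φ0M (x n) (v n)
      + lam1 * ∑ i : Fin N,
          φ1M (x i.succ - x i.castSucc) (v i.succ - v i.castSucc)) :
    (∀ x v : Fin (N + 1) → ℝ, F x ≤ FM x v) ∧
    (∀ v : Fin (N + 1) → ℝ, FM v v = F v) := by
  have key0 : ∀ t u : ℝ, φ0 t ≤ φ0M t u := by
    intro t u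
    simp only [hφ0M]
    exact penalty_ineq hφ0 s0 hs0 t u
  have key1 : ∀ t u : ℝ, φ1 t ≤ φ1M t u := by
    intro t u
    simp only [hφ1M]
    exact penalty_ineq hφ1 s1 hs1 t u
  have e0 : ∀ t : ℝ, φ0M t t = φ0 t := by
    intro t
    simp only [hφ0M, hs0]
    ring
  have e1 : ∀ t : ℝ, φ1M t t = φ1 t := by
    intro t
    simp only [hφ1M, hs1]
    ring
  constructor
  · intro x v
    rw [hF x, hFM x v]
    refine add_le_add (add_le_add le_rfl ?_) ?_
    · exact mul_le_mul_of_nonneg_left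
        (Finset.sum_le_sum fun n _ => key0 (x n) (v n)) hlam0.le
    · exact mul_le_mul_of_nonneg_left
        (Finset.sum_le_sum fun i _ => key1 _ _) hlam1.le
  · intro v
    rw [hF v, hFM v v]
    simp only [e0, e1]
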